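/- Let m be even, n = 2m, l = (2^m − 1)/3, d = (2^(m−1)+1)l + 1, u ∈ GF(2^n) with u^(2^m+1) = 1 and u ∉ GF(2^m). Then for all z ∈ GF(2^m) with z ≠ u, u^(-1): Tr^n_m((z + u)^(2d)) = Tr^n_m((z + u)^(2l)) / (z^2 + Tr^n_m(u)·z + 1)^(l − 1). -/
import Mathlib


/-- Let `m` be even, `n = 2m`, `l = (2^m − 1)/3`, `d = (2^(m−1)+1)l + 1`,
`u ∈ GF(2^n) \ GF(2^m)` with `u^(2^m+1) = 1`. Then for all `z ∈ GF(2^m)` with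
`z ≠ u, u⁻¹`:
`Tr^n_m((z + u)^(2d)) = Tr^n_m((z + u)^(2l)) / (z² + Tr^n_m(u)·z + 1)^(l − 1)`. -/
theorem stmt_18 (m : ℕ) (hm0 : 0 < m) (hm : Even m) (F : Type*) [Field F] [Fintype F]
    (hcard : Fintype.card F = 2 ^ (2 * m))
    (l : ℕ) (hl : 3 * l = 2 ^ m - 1)
    (d : ℕ) (hd : d = (2 ^ (m - 1) + 1) * l + 1)
    (u : F) (hu1 : u ^ (2 ^ m + 1) = 1) (hu : u ^ (2 ^ m) ≠ u) :
    ∀ z : F, z ^ (2 ^ m) = z → z ≠ u → z ≠ u⁻¹ →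
      (z + u) ^ (2 * d) + ((z + u) ^ (2 * d)) ^ (2 ^ m) =
        ((z + u) ^ (2 * l) + ((z + u) ^ (2 * l)) ^ (2 ^ m)) /
          (z ^ 2 + (u + u ^ (2 ^ m)) * z + 1) ^ (l - 1) := by
  intro z hz hz1 hz2
  -- characteristic 2
  obtain ⟨p, hp⟩ := CharP.exists F
  haveI := hp
  obtain ⟨k, hpk, hck⟩ := FiniteField.card F p
  have hp2 : p = 2 := by
    have hdvd : p ∣ 2 ^ (2 * m) := by
      rw [← hcard, hck]; exact dvd_pow_self p k.2.ne'
    exact (Nat.prime_dvd_prime_iff_eq hpk Nat.prime_two).mp (hpk.dvd_of_dvd_pow hdvd)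
  subst hp2
  haveI : Fact (Nat.Prime 2) := ⟨Nat.prime_two⟩
  set q := 2 ^ m with hqdef
  -- basic numeric facts
  have hm2 : 2 ≤ m := by
    rcases hm with ⟨t, ht⟩; omega
  have hq4 : 4 ≤ q := by
    calc (4 : ℕ) = 2 ^ 2 := by norm_num
    _ ≤ 2 ^ m := Nat.pow_le_pow_right (by norm_num) hm2
  have hqe : q = 3 * l + 1 := by omega
  have hl1 : 1 ≤ l := by omega
  obtain ⟨c, rfl⟩ : ∃ c, l = c + 1 := ⟨l - 1, by omega⟩
  set l := c + 1
  -- frobenius facts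
  have hfrob : ∀ x : F, x ^ (q ^ 2) = x := by
    intro x
    have : q ^ 2 = Fintype.card F := by rw [hcard, hqdef, ← pow_mul]; ring_nf
    rw [this, FiniteField.pow_card]
  have hu0 : u ≠ 0 := by
    intro h; rw [h, zero_pow (by positivity)] at hu1; exact zero_ne_one hu1
  have huq : u ^ q = u⁻¹ := by
    exact eq_inv_of_mul_eq_one_right (by rw [← pow_succ']; exact hu1)
  set w := z + u with hwdef
  have hw0 : w ≠ 0 := by
    intro h
    apply hz1
    have : z = -u := by rw [hwdef] at h; linear_combination h
    rw [this, CharTwo.neg_eq]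
  have hwq : w ^ q = z + u⁻¹ := by
    rw [hwdef, hqdef, add_pow_char_pow, ← hqdef, hz, huq]
  set N := w ^ (q + 1) with hNdef
  have hN0 : N ≠ 0 := pow_ne_zero _ hw0
  -- denominator equals N
  have hden : z ^ 2 + (u + u ^ q) * z + 1 = N := by
    have h1 : w ^ (q + 1) = w ^ q * w := pow_succ w q
    rw [hNdef, h1, hwq, hwdef, huq]
    field_simp
    ring
  rw [hden]
  -- rewrite exponent 2*d
  have h2d : 2 * d = (q + 1) * l + (l + 2) := by
    have h2m : 2 * 2 ^ (m - 1) = q := by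
      rw [hqdef, ← pow_succ']; congr 1; omega
    subst hd
    calc 2 * ((2 ^ (m - 1) + 1) * l + 1) = (2 * 2 ^ (m - 1)) * l + 2 * l + 2 := by ring
    _ = q * l + 2 * l + 2 := by rw [h2m]
    _ = (q + 1) * l + (l + 2) := by ring
  have hNfix : N ^ q = N := by
    have h1 : N ^ q = w ^ (q ^ 2) * w ^ q := by
      rw [hNdef, ← pow_mul, ← pow_add]; congr 1; ring
    rw [h1, hfrob w, hNdef, pow_succ']
  have hpowd : w ^ (2 * d) = N ^ l * w ^ (l + 2) := by
    rw [h2d, pow_add, hNdef, ← pow_mul]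
  rw [hpowd]
  have hfr : ∀ a b : F, ∀ j : ℕ, (a * b) ^ q = a ^ q * b ^ q ∧ (a ^ j) ^ q = (a ^ q) ^ j := by
    intro a b j; exact ⟨mul_pow a b q, by rw [← pow_mul, mul_comm, pow_mul]⟩
  have hmulq : (N ^ l * w ^ (l + 2)) ^ q = N ^ l * (w ^ q) ^ (l + 2) := by
    rw [mul_pow]
    congr 1
    · rw [← pow_mul, mul_comm, pow_mul, hNfix]
    · rw [← pow_mul, mul_comm, pow_mul]
  rw [hmulq]
  rw [eq_div_iff (pow_ne_zero _ hN0)]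
  have hwlq : (w ^ (2 * l)) ^ q = (w ^ q) ^ (2 * l) := by
    rw [← pow_mul, mul_comm, pow_mul]
  rw [hwlq]
  -- now a pure power-of-w identity
  have key : (N ^ l * w ^ (l + 2) + N ^ l * (w ^ q) ^ (l + 2)) * N ^ (l - 1)
      = w ^ (2 * l) + (w ^ q) ^ (2 * l) := by
    have hsub : l - 1 = c := by omega
    rw [hsub]
    have e1 : N ^ l * w ^ (l + 2) * N ^ c = w ^ (2 * l * q) := by
      rw [hNdef, ← pow_mul, ← pow_mul, ← pow_add, ← pow_add]
      congr 1
      rw [hqe]; show ((3*(c+1)+1) + 1) * (c+1) + ((c+1)+2) + ((3*(c+1)+1)+1) * c = 2*(c+1)*(3*(c+1)+1)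
      ring
    have e2 : N ^ l * (w ^ q) ^ (l + 2) * N ^ c = w ^ (2 * l) := by
      rw [hNdef, ← pow_mul, ← pow_mul, ← pow_mul, ← pow_add, ← pow_add]
      have hexp : (q + 1) * l + q * (l + 2) + (q + 1) * c = q ^ 2 + (2 * c + 1) := by
        rw [hqe]; show ((3*(c+1)+1) + 1) * (c+1) + (3*(c+1)+1) * ((c+1)+2) + ((3*(c+1)+1)+1) * c
          = (3*(c+1)+1) ^ 2 + (2*c+1)
        ring
      rw [hexp, pow_add, hfrob w, ← pow_succ']
      have h22 : 2 * c + 1 + 1 = 2 * l := by omega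
      rw [h22]
    calc (N ^ l * w ^ (l + 2) + N ^ l * (w ^ q) ^ (l + 2)) * N ^ c
        = N ^ l * w ^ (l + 2) * N ^ c + N ^ l * (w ^ q) ^ (l + 2) * N ^ c := by ring
    _ = w ^ (2 * l * q) + w ^ (2 * l) := by rw [e1, e2]
    _ = w ^ (2 * l) + (w ^ q) ^ (2 * l) := by
        rw [← pow_mul, mul_comm (2*l) q, pow_mul]; ring
  exact key
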